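/- Let $q$ be a prime power, $K = \mathbb{F}_q(T)$, and $a \in K^\times$. Let $n \geq 1$ with $p \nmid n$, where $p$ is the characteristic. If $K(a^{1/n})$ is a constant field extension of $K$ (i.e., $K(a^{1/n}) = (K(a^{1/n}) \cap \overline{\mathbb{F}}_q) \cdot K$), then there exist $\mu \in \mathbb{F}_q^\times$ and $b \in K^\times$ such that $a = \mu b^n$. -/

import Mathlib

open Polynomial

theorem descend_pow {F F' : Type*} [Field F] [PerfectField F] [Field F'] (incl : F →+* F')
    {n : ℕ} (hn : 1 ≤ n) :
    ∀ N : ℕ, ∀ f : F[X], f.natDegree ≤ N → f.Monic →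
      ∀ s : F'[X], f.map incl = s ^ n →
      ∃ h : F[X], h.Monic ∧ f = h ^ n := by
  intro N
  induction N with
  | zero =>
    intro f hdeg hf s hmap
    have : f = 1 := hf.natDegree_eq_zero.mp (Nat.le_zero.mp hdeg)
    exact ⟨1, monic_one, by simp [this]⟩
  | succ N ih =>
    intro f hdeg hf s hmap
    by_cases h0 : f.natDegree = 0
    · have : f = 1 := hf.natDegree_eq_zero.mp h0
      exact ⟨1, monic_one, by simp [this]⟩
    · have hfu : ¬ IsUnit f := f.not_isUnit_of_natDegree_pos (Nat.pos_of_ne_zero h0)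
      obtain ⟨P, hPm, hPirr, hPdvd⟩ := f.exists_monic_irreducible_factor hfu
      obtain ⟨e, r, hPr, hfe⟩ := WfDvdMonoid.max_power_factor hf.ne_zero hPirr
      have hrm : r.Monic := ((hPm.pow e).of_mul_monic_left (hfe ▸ hf))
      have hr0 : r ≠ 0 := hrm.ne_zero
      have he1 : 1 ≤ e := by
        rcases Nat.eq_zero_or_pos e with h | h
        · exfalso; apply hPr
          have := hPdvd
          rwa [hfe, h, pow_zero, one_mul] at this
        · exact h
      -- s ≠ 0
      have hs0 : s ≠ 0 := by
        intro h
        have : f.map incl = 0 := by rw [hmap, h, zero_pow (by omega)]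
        exact (hf.map incl).ne_zero this
      -- pick irreducible factor Q of map P
      have hmPu : ¬ IsUnit (P.map incl) := by
        apply Polynomial.not_isUnit_of_natDegree_pos
        rw [P.natDegree_map incl]
        exact hPirr.natDegree_pos
      obtain ⟨Q, hQm, hQirr, hQdvd⟩ := (P.map incl).exists_monic_irreducible_factor hmPu
      have hQp : Prime Q := hQirr.prime
      -- coprimality
      have hcop : IsCoprime P r := hPirr.coprime_iff_not_dvd.mpr hPr
      have hcop' : IsCoprime (P.map incl) (r.map incl) := hcop.map (mapRingHom incl)
      have hmap' : (P.map incl) ^ e * r.map incl = s ^ n := by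
        rw [← Polynomial.map_pow, ← Polynomial.map_mul, ← hfe, hmap]
      -- emultiplicity computation
      have hsq : Squarefree (P.map incl) := ((PerfectField.separable_of_irreducible hPirr).map).squarefree
      have hQP : emultiplicity Q (P.map incl) = (1 : ℕ) := by
        rw [emultiplicity_eq_coe]
        refine ⟨by simpa using hQdvd, fun h2 => hQirr.not_isUnit (hsq Q (by simpa [pow_succ, pow_one] using h2))⟩
      have hQr : emultiplicity Q (r.map incl) = 0 := by
        rw [emultiplicity_eq_zero]
        intro hQdvd'
        exact hQirr.not_isUnit (hcop'.isUnit_of_dvd' hQdvd hQdvd')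
      have hfin : FiniteMultiplicity Q s := FiniteMultiplicity.of_not_isUnit hQirr.not_isUnit hs0
      have hem : (e : ℕ∞) = n * multiplicity Q s := by
        have h1 : emultiplicity Q ((P.map incl) ^ e * r.map incl) = e := by
          rw [emultiplicity_mul hQp, emultiplicity_pow hQp, hQP, hQr]
          simp
        have h2 : emultiplicity Q (s ^ n) = n * multiplicity Q s := by
          rw [emultiplicity_pow hQp, hfin.emultiplicity_eq_multiplicity]
        rw [← h1, hmap', h2]
      set m := multiplicity Q s with hm
      have hemn : e = n * m := by exact_mod_cast hem
      -- descend r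
      obtain ⟨d, hd⟩ := exists_associated_pow_of_mul_eq_pow'
        (hcop'.symm.pow_right (n := e)) (by rw [mul_comm]; exact hmap')
      have hd0 : d ≠ 0 := by
        intro h
        rw [h, zero_pow (by omega)] at hd
        exact (hrm.map incl).ne_zero ((associated_zero_iff_eq_zero _).mp hd.symm)
      have hl0 : d.leadingCoeff ≠ 0 := leadingCoeff_ne_zero.mpr hd0
      set d' : F'[X] := d * C d.leadingCoeff⁻¹ with hd'
      have hd'm : d'.Monic := monic_mul_leadingCoeff_inv hd0
      have hassoc : Associated (d' ^ n) (d ^ n) := by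
        apply Associated.pow_pow
        exact (associated_mul_unit_right d _ (Polynomial.isUnit_C.mpr (inv_ne_zero hl0).isUnit)).symm
      have hrd : r.map incl = d' ^ n :=
        Polynomial.eq_of_monic_of_associated (hrm.map incl) (hd'm.pow n)
          (hassoc.trans hd).symm
      -- degree bound for recursion
      have hdegr : r.natDegree ≤ N := by
        have hP1 : 1 ≤ P.natDegree := hPirr.natDegree_pos
        have h2 : f.natDegree = e * P.natDegree + r.natDegree := by
          rw [hfe, natDegree_mul (pow_ne_zero e hPm.ne_zero) hr0, natDegree_pow]
        have h3 : 1 ≤ e * P.natDegree := Nat.one_le_iff_ne_zero.mpr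
          (Nat.mul_ne_zero (by omega) (by omega))
        omega
      obtain ⟨h, hhm, hhr⟩ := ih r hdegr hrm d' hrd
      refine ⟨P ^ m * h, (hPm.pow m).mul hhm, ?_⟩
      rw [hfe, hemn, hhr, mul_pow, ← pow_mul, Nat.mul_comm]

theorem ratfunc_pow_descend {F F' : Type*} [Field F] [PerfectField F] [Field F']
    (incl : F →+* F') (ρ : RatFunc F →+* RatFunc F')
    (hρ : ∀ p : F[X], ρ (algebraMap F[X] (RatFunc F) p)
      = algebraMap F'[X] (RatFunc F') (p.map incl))
    {n : ℕ} (hn : 1 ≤ n) (a : RatFunc F) (ha : a ≠ 0) (u : RatFunc F')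
    (h : u ^ n = ρ a) :
    ∃ μ : Fˣ, ∃ b : (RatFunc F)ˣ,
      a = algebraMap F (RatFunc F) (μ : F) * (b : RatFunc F) ^ n := by
  set f0 := a.num with hf0
  set g0 := a.denom with hg0
  set s0 := u.num with hs0
  set t0 := u.denom with ht0
  have hf00 : f0 ≠ 0 := RatFunc.num_ne_zero ha
  have hg00 : g0 ≠ 0 := a.denom_ne_zero
  have ht00 : t0 ≠ 0 := u.denom_ne_zero
  have hu0 : u ≠ 0 := by
    intro h'
    apply ha
    apply (map_eq_zero_iff ρ ρ.injective).mp
    rw [← h, h', zero_pow (by omega)]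
  have hs00 : s0 ≠ 0 := RatFunc.num_ne_zero hu0
  -- main polynomial identity
  have key : s0 ^ n * g0.map incl = f0.map incl * t0 ^ n := by
    have h2 := h
    rw [← u.num_div_denom, ← a.num_div_denom, map_div₀, hρ, hρ, div_pow,
      div_eq_div_iff (pow_ne_zero n (RatFunc.algebraMap_ne_zero ht00))
        (RatFunc.algebraMap_ne_zero ((Polynomial.map_ne_zero_iff incl.injective).mpr hg00)),
      ← map_pow, ← map_pow, ← map_mul, ← map_mul] at h2
    exact RatFunc.algebraMap_injective F' h2
  have hc1 : IsCoprime s0 t0 := u.isCoprime_num_denom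
  have hc2 : IsCoprime (f0.map incl) (g0.map incl) :=
    a.isCoprime_num_denom.map (Polynomial.mapRingHom incl)
  -- g0.map incl = t0 ^ n
  have hdvd1 : t0 ^ n ∣ g0.map incl := by
    have : t0 ^ n ∣ s0 ^ n * g0.map incl := by rw [key]; exact Dvd.intro _ (mul_comm _ _)
    exact ((hc1.symm.pow).dvd_of_dvd_mul_left this)
  have hdvd2 : g0.map incl ∣ t0 ^ n := by
    have : g0.map incl ∣ f0.map incl * t0 ^ n := by
      rw [← key]; exact Dvd.intro _ (mul_comm _ _)
    exact (hc2.symm.dvd_of_dvd_mul_left this)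
  have hgt : g0.map incl = t0 ^ n :=
    Polynomial.eq_of_monic_of_associated ((a.monic_denom).map incl)
      ((u.monic_denom).pow n) (associated_of_dvd_dvd hdvd2 hdvd1)
  -- s0 ^ n = f0.map incl
  have hsf : s0 ^ n = f0.map incl := by
    have := key
    rw [hgt] at this
    exact mul_right_cancel₀ (pow_ne_zero n ht00) this
  -- leading coefficients
  set γ := f0.leadingCoeff with hγ
  have hγ0 : γ ≠ 0 := Polynomial.leadingCoeff_ne_zero.mpr hf00
  set δ := s0.leadingCoeff with hδ
  have hδ0 : δ ≠ 0 := Polynomial.leadingCoeff_ne_zero.mpr hs00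
  have hγδ : incl γ = δ ^ n := by
    rw [hγ, ← Polynomial.leadingCoeff_map_of_injective incl.injective, ← hsf, Polynomial.leadingCoeff_pow]
  -- descend numerator
  have hmapf : (f0 * Polynomial.C γ⁻¹).map incl = (s0 * Polynomial.C δ⁻¹) ^ n := by
    rw [Polynomial.map_mul, Polynomial.map_C, map_inv₀, hγδ, mul_pow, ← Polynomial.C_pow,
      ← inv_pow, hsf]
  obtain ⟨h1, hh1m, hh1⟩ := descend_pow incl hn (f0 * Polynomial.C γ⁻¹).natDegree
    (f0 * Polynomial.C γ⁻¹) le_rfl (Polynomial.monic_mul_leadingCoeff_inv hf00) _ hmapf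
  have hf0eq : f0 = Polynomial.C γ * h1 ^ n := by
    have : f0 * Polynomial.C γ⁻¹ * Polynomial.C γ = Polynomial.C γ * h1 ^ n := by
      rw [hh1]; ring
    rw [← this, mul_assoc, ← Polynomial.C_mul, inv_mul_cancel₀ hγ0]
    simp
  -- descend denominator
  obtain ⟨k, hkm, hkeq⟩ := descend_pow incl hn g0.natDegree g0 le_rfl a.monic_denom t0 hgt
  -- assemble
  have hk0 : (algebraMap F[X] (RatFunc F)) k ≠ 0 := RatFunc.algebraMap_ne_zero hkm.ne_zero
  have hh10 : (algebraMap F[X] (RatFunc F)) h1 ≠ 0 := RatFunc.algebraMap_ne_zero hh1m.ne_zero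
  refine ⟨Units.mk0 γ hγ0, Units.mk0 (algebraMap F[X] (RatFunc F) h1 / algebraMap F[X] (RatFunc F) k)
    (div_ne_zero hh10 hk0), ?_⟩
  rw [← a.num_div_denom, ← hf0, ← hg0, hf0eq, hkeq]
  simp only [Units.val_mk0, map_mul, map_pow, RatFunc.algebraMap_C, div_pow]
  rw [RatFunc.algebraMap_eq_C]
  field_simp

theorem stmt_8 (F : Type*) [Field F] [Fintype F] (n : ℕ) (hn : 1 ≤ n)
    (hp : ¬ (ringChar F ∣ n))
    (a : (RatFunc F)ˣ) (x : AlgebraicClosure (RatFunc F))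
    (hx : x ^ n = algebraMap (RatFunc F) (AlgebraicClosure (RatFunc F)) (a : RatFunc F))
    (hconst : IntermediateField.adjoin (RatFunc F) {x} =
      IntermediateField.adjoin (RatFunc F)
        {y : AlgebraicClosure (RatFunc F) |
          IsAlgebraic F y ∧ y ∈ IntermediateField.adjoin (RatFunc F) {x}}) :
    ∃ μ : Fˣ, ∃ b : (RatFunc F)ˣ,
      (a : RatFunc F) = algebraMap F (RatFunc F) (μ : F) * (b : RatFunc F) ^ n := by
  classical
  have hxadj : x ∈ IntermediateField.adjoin (RatFunc F)
      {y : AlgebraicClosure (RatFunc F) | IsAlgebraic F y ∧ y ∈ IntermediateField.adjoin (RatFunc F) {x}} := by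
    rw [← hconst]
    exact IntermediateField.mem_adjoin_simple_self _ x
  obtain ⟨T, hTsub, hxT⟩ := IntermediateField.exists_finset_of_mem_adjoin hxadj
  set F' : IntermediateField F (AlgebraicClosure (RatFunc F)) := IntermediateField.adjoin F (T : Set (AlgebraicClosure (RatFunc F))) with hF'
  haveI : FiniteDimensional F F' :=
    IntermediateField.finiteDimensional_adjoin (fun y hy => ((hTsub hy).1).isIntegral)
  -- transcendence of t over F'
  set t : AlgebraicClosure (RatFunc F) := algebraMap (RatFunc F) (AlgebraicClosure (RatFunc F)) RatFunc.X with htdef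
  have htF : Transcendental F t := by
    rw [htdef, transcendental_algebraMap_iff (algebraMap (RatFunc F) (AlgebraicClosure (RatFunc F))).injective,
      ← RatFunc.algebraMap_X,
      transcendental_algebraMap_iff (RatFunc.algebraMap_injective F)]
    exact Polynomial.transcendental_X F
  have htr : Transcendental F' t := by
    intro halg
    exact htF (isIntegral_trans (R := F) t halg.isIntegral).isAlgebraic
  -- the embedding RatFunc F' → AC
  have hψinj : Function.Injective ((Polynomial.aeval t : F'[X] →ₐ[F'] (AlgebraicClosure (RatFunc F))) : F'[X] →+* (AlgebraicClosure (RatFunc F))) :=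
    transcendental_iff_injective.mp htr
  set φ : RatFunc F' →+* (AlgebraicClosure (RatFunc F)) := IsFractionRing.lift hψinj with hφ
  have hφalg : ∀ p : F'[X], φ (algebraMap F'[X] (RatFunc F') p) = Polynomial.aeval t p :=
    fun p => IsFractionRing.lift_algebraMap hψinj p
  -- the map RatFunc F → RatFunc F'
  have hρinj : Function.Injective
      ((algebraMap F'[X] (RatFunc F')).comp (Polynomial.mapRingHom (algebraMap F F'))) :=
    (RatFunc.algebraMap_injective F').comp
      (Polynomial.map_injective _ (algebraMap F F').injective)
  set ρ : RatFunc F →+* RatFunc F' := IsFractionRing.lift hρinj with hρdef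
  have hρalg : ∀ p : F[X], ρ (algebraMap F[X] (RatFunc F) p)
      = algebraMap F'[X] (RatFunc F') (p.map (algebraMap F F')) :=
    fun p => IsFractionRing.lift_algebraMap hρinj p
  -- compatibility
  have hφρ : ∀ z : RatFunc F, φ (ρ z) = algebraMap (RatFunc F) (AlgebraicClosure (RatFunc F)) z := by
    have : φ.comp ρ = algebraMap (RatFunc F) (AlgebraicClosure (RatFunc F)) := by
      apply IsLocalization.ringHom_ext (nonZeroDivisors (Polynomial F))
      apply Polynomial.ringHom_ext
      · intro c
        simp only [RingHom.comp_apply, RingHom.coe_comp, Function.comp_apply]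
        rw [hρalg, Polynomial.map_C, hφalg, Polynomial.aeval_C]
        rw [← IsScalarTower.algebraMap_apply F F' (AlgebraicClosure (RatFunc F)),
          RatFunc.algebraMap_C, ← RatFunc.algebraMap_eq_C,
          ← IsScalarTower.algebraMap_apply F (RatFunc F) (AlgebraicClosure (RatFunc F))]
      · simp only [RingHom.comp_apply, RingHom.coe_comp, Function.comp_apply]
        rw [hρalg, Polynomial.map_X, hφalg, Polynomial.aeval_X, RatFunc.algebraMap_X]
    intro z
    exact congrFun (congrArg (↑·) this) z
  -- x is in the range of φ
  set M : IntermediateField (RatFunc F) (AlgebraicClosure (RatFunc F)) :=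
    Subfield.toIntermediateField φ.fieldRange (fun z => ⟨ρ z, hφρ z⟩) with hM
  have hTM : (T : Set (AlgebraicClosure (RatFunc F))) ⊆ M := by
    intro y hy
    have hyF' : y ∈ F' := IntermediateField.subset_adjoin F _ hy
    refine ⟨algebraMap F'[X] (RatFunc F') (Polynomial.C ⟨y, hyF'⟩), ?_⟩
    rw [hφalg, Polynomial.aeval_C]
    rfl
  have hxM : x ∈ M := (IntermediateField.adjoin_le_iff.mpr hTM) hxT
  obtain ⟨u, hu⟩ := hxM
  have hun : u ^ n = ρ (a : RatFunc F) := by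
    apply φ.injective
    rw [map_pow, hu, hφρ]
    exact hx
  obtain ⟨μ, b, hab⟩ := ratfunc_pow_descend (algebraMap F F') ρ hρalg hn
    (a : RatFunc F) a.ne_zero u hun
  exact ⟨μ, b, hab⟩
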